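/- Let G = G₁ ∪ G₂ be a directed graph with finitely many vertices, sharing n vertices, no shared edges, with no edge of G₂ entering G₁ and G₂^0 ≠ G^0. Then C*(G) ≅ (C*(G₁) ⊕ ℂ) *_{ℂ^{n+2}} (C*(G₂) ⊕ ℂ), where amalgamation is via θ₁(λ₁,...,λ_{n+2}) = (Σ_{i=1}^n λᵢ p̄ᵢ + λ_{n+1} Σ_α p̄_α, λ_{n+2}) and θ₂(λ₁,...,λ_{n+2}) = (Σ_{i=1}^n λᵢ p̿ᵢ + λ_{n+2} Σ_β p̿_β, λ_{n+1}), where p₁,...,p_n are shared vertices, p_α ranges over vertices of G₁ not in G₂, and p_β over vertices of G₂ not in G₁. -/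

import Mathlib

open scoped Matrix.Norms.L2Operator

/-- A unital Cuntz–Krieger `G`-family in a unital complex star algebra `A`, for
a finite directed graph `G = (V, E, s, r)`: mutually orthogonal self-adjoint
idempotents `p v` summing to `1`, and elements `se e` satisfying the
Cuntz–Krieger relations. -/
structure CKFamily (V E : Type) [Fintype V] [Fintype E] [DecidableEq V]
    (s r : E → V) (A : Type*) [Ring A] [Algebra ℂ A] [StarRing A] where
  p : V → A
  se : E → A
  proj_idem : ∀ v, p v * p v = p v
  proj_star : ∀ v, star (p v) = p v
  orth : ∀ v w, v ≠ w → p v * p w = 0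
  ck1 : ∀ e, star (se e) * se e = p (s e)
  ck2 : ∀ v, (∃ e, r e = v) →
    p v = ∑ e ∈ Finset.univ.filter (fun e => r e = v), se e * star (se e)
  sum_p : ∑ v, p v = 1

/-- The C*-algebra `A`, equipped with the Cuntz–Krieger family `F`, is the
graph C*-algebra `C*(G)`: it satisfies the universal property that every
Cuntz–Krieger `G`-family in a unital C*-algebra `B` is the image of `F` under a
unique unital *-homomorphism. -/
def IsUniversalCKFamily (V E : Type) [Fintype V] [Fintype E] [DecidableEq V]
    (s r : E → V) (A : Type*) [Ring A] [Algebra ℂ A] [StarRing A]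
    (F : CKFamily V E s r A) : Prop :=
  ∀ (B : Type) [NormedRing B] [StarRing B] [CStarRing B] [NormedAlgebra ℂ B]
    [StarModule ℂ B] [CompleteSpace B] (Q : CKFamily V E s r B),
    ∃! φ : A →⋆ₐ[ℂ] B, (∀ v, φ (F.p v) = Q.p v) ∧ (∀ e, φ (F.se e) = Q.se e)

/-- A cycle of length `n` in a directed graph. -/
def IsGraphCycle {V E : Type*} (s r : E → V) (n : ℕ) (c : ZMod n → E) : Prop :=
  0 < n ∧ ∀ i : ZMod n, s (c (i + 1)) = r (c i)

/-- `(C, i₁, i₂)` is the unital full amalgamated free product of `A₁` and `A₂`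
over `D`. -/
def IsAmalgamatedFreeProduct
    {D A₁ A₂ C : Type*}
    [Ring D] [Algebra ℂ D] [StarRing D] [Ring A₁] [Algebra ℂ A₁] [StarRing A₁]
    [Ring A₂] [Algebra ℂ A₂] [StarRing A₂] [Ring C] [Algebra ℂ C] [StarRing C]
    (θ₁ : D →⋆ₐ[ℂ] A₁) (θ₂ : D →⋆ₐ[ℂ] A₂)
    (i₁ : A₁ →⋆ₐ[ℂ] C) (i₂ : A₂ →⋆ₐ[ℂ] C) : Prop :=
  i₁.comp θ₁ = i₂.comp θ₂ ∧
  ∀ (B : Type) [NormedRing B] [StarRing B] [CStarRing B] [NormedAlgebra ℂ B]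
    [StarModule ℂ B] [CompleteSpace B]
    (π₁ : A₁ →⋆ₐ[ℂ] B) (π₂ : A₂ →⋆ₐ[ℂ] B), π₁.comp θ₁ = π₂.comp θ₂ →
      ∃! π : C →⋆ₐ[ℂ] B, π.comp i₁ = π₁ ∧ π.comp i₂ = π₂


set_option linter.unusedSectionVars false

/-- A projection in a star ring. -/
structure Proj (A : Type) [Mul A] [Star A] : Type where
  val : A
  idem : val * val = val
  sa : star val = val

/-- The corner of a unital algebra at a projection. -/
@[ext] structure Corner {A : Type} [Ring A] [StarRing A] (q : Proj A) : Type where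
  val : A
  meml : q.val * val = val
  memr : val * q.val = val

section CornerDef

variable {A : Type} [Ring A] [Algebra ℂ A] [StarRing A] [StarModule ℂ A]

namespace Corner

variable {q : Proj A}

instance : Zero (Corner q) := ⟨⟨0, by simp, by simp⟩⟩
instance : Add (Corner q) := ⟨fun x y => ⟨x.1 + y.1,
  by rw [mul_add, x.meml, y.meml], by rw [add_mul, x.memr, y.memr]⟩⟩
instance : Neg (Corner q) := ⟨fun x => ⟨-x.1,
  by rw [mul_neg, x.meml], by rw [neg_mul, x.memr]⟩⟩
instance : Sub (Corner q) := ⟨fun x y => ⟨x.1 - y.1,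
  by rw [mul_sub, x.meml, y.meml], by rw [sub_mul, x.memr, y.memr]⟩⟩
instance : One (Corner q) := ⟨⟨q.val, q.idem, q.idem⟩⟩
instance : Mul (Corner q) := ⟨fun x y => ⟨x.1 * y.1,
  by rw [← mul_assoc, x.meml], by rw [mul_assoc, y.memr]⟩⟩
instance : SMul ℂ (Corner q) := ⟨fun c x => ⟨c • x.1,
  by rw [mul_smul_comm, x.meml], by rw [smul_mul_assoc, x.memr]⟩⟩
instance : SMul ℕ (Corner q) := ⟨fun n x => ⟨n • x.1,
  by rw [mul_smul_comm, x.meml], by rw [smul_mul_assoc, x.memr]⟩⟩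
instance : SMul ℤ (Corner q) := ⟨fun n x => ⟨n • x.1,
  by rw [mul_smul_comm, x.meml], by rw [smul_mul_assoc, x.memr]⟩⟩
instance : Star (Corner q) := ⟨fun x => ⟨star x.1,
  by rw [← q.sa, ← star_mul, x.memr], by rw [← q.sa, ← star_mul, x.meml]⟩⟩

@[simp] lemma val_zero : (0 : Corner q).1 = 0 := rfl
@[simp] lemma val_add (x y : Corner q) : (x + y).1 = x.1 + y.1 := rfl
@[simp] lemma val_neg (x : Corner q) : (-x).1 = -x.1 := rfl
@[simp] lemma val_sub (x y : Corner q) : (x - y).1 = x.1 - y.1 := rfl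
@[simp] lemma val_one : (1 : Corner q).1 = q.val := rfl
@[simp] lemma val_mul (x y : Corner q) : (x * y).1 = x.1 * y.1 := rfl
@[simp] lemma val_smul (c : ℂ) (x : Corner q) : (c • x).1 = c • x.1 := rfl
@[simp] lemma val_nsmul (n : ℕ) (x : Corner q) : (n • x).1 = n • x.1 := rfl
@[simp] lemma val_zsmul (n : ℤ) (x : Corner q) : (n • x).1 = n • x.1 := rfl
@[simp] lemma val_star (x : Corner q) : (star x).1 = star x.1 := rfl

lemma val_injective : Function.Injective (Corner.val : Corner q → A) := by
  intro x y h; ext; exact h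

instance : AddCommGroup (Corner q) :=
  val_injective.addCommGroup _ rfl (fun _ _ => rfl) (fun _ => rfl) (fun _ _ => rfl)
    (fun _ _ => rfl) (fun _ _ => rfl)

instance : Ring (Corner q) :=
  { (inferInstance : AddCommGroup (Corner q)) with
    mul := (· * ·)
    one := 1
    mul_assoc := fun x y z => by ext; exact mul_assoc x.1 y.1 z.1
    one_mul := fun x => by ext; exact x.meml
    mul_one := fun x => by ext; exact x.memr
    left_distrib := fun x y z => by ext; exact mul_add x.1 y.1 z.1
    right_distrib := fun x y z => by ext; exact add_mul x.1 y.1 z.1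
    zero_mul := fun x => by ext; exact zero_mul x.1
    mul_zero := fun x => by ext; exact mul_zero x.1 }

/-- `Corner.val` as an additive monoid hom. -/
def valAddHom : Corner q →+ A :=
  { toFun := Corner.val, map_zero' := rfl, map_add' := fun _ _ => rfl }

instance : Module ℂ (Corner q) :=
  val_injective.module ℂ (valAddHom : Corner q →+ A) (fun _ _ => rfl)

instance : Algebra ℂ (Corner q) :=
  Algebra.ofModule (fun c x y => by ext; exact smul_mul_assoc c x.1 y.1)
    (fun c x y => by ext; exact mul_smul_comm c x.1 y.1)

@[simp] lemma val_algebraMap (c : ℂ) : (algebraMap ℂ (Corner q) c).1 = c • q.val := rfl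

instance : StarRing (Corner q) where
  star := star
  star_involutive := fun x => by ext; exact star_star x.1
  star_mul := fun x y => by ext; exact star_mul x.1 y.1
  star_add := fun x y => by ext; exact star_add x.1 y.1

instance : StarModule ℂ (Corner q) :=
  ⟨fun c x => by ext; exact star_smul c x.1⟩

/-- `Corner.val` as a non-unital ring hom. -/
def valNRH : Corner q →ₙ+* A :=
  { toFun := Corner.val
    map_mul' := fun _ _ => rfl
    map_zero' := rfl
    map_add' := fun _ _ => rfl }

lemma val_sum {ι : Type*} (s : Finset ι) (f : ι → Corner q) :
    (∑ i ∈ s, f i).1 = ∑ i ∈ s, (f i).1 :=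
  map_sum (valAddHom : Corner q →+ A) f s

end Corner

end CornerDef

section CornerCStar

variable {A : Type} [NormedRing A] [StarRing A] [CStarRing A] [NormedAlgebra ℂ A]
  [StarModule ℂ A] [CompleteSpace A] {q : Proj A}

namespace Corner

noncomputable instance : NormedRing (Corner q) :=
  NormedRing.induced (Corner q) A (valNRH : Corner q →ₙ+* A) val_injective

@[simp] lemma val_norm (x : Corner q) : ‖x‖ = ‖x.1‖ := rfl

noncomputable instance : NormedAlgebra ℂ (Corner q) :=
  { (inferInstance : Algebra ℂ (Corner q)) with
    norm_smul_le := fun c x => by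
      rw [val_norm, val_norm, val_smul]
      exact norm_smul_le c x.1 }

instance : CStarRing (Corner q) :=
  ⟨fun x => by
    rw [val_norm, val_norm]
    exact le_of_eq (CStarRing.norm_star_mul_self (x := x.1)).symm⟩

instance : CompleteSpace (Corner q) := by
  have hiso : Isometry (Corner.val : Corner q → A) :=
    AddMonoidHomClass.isometry_of_norm (valNRH : Corner q →ₙ+* A) (fun x => rfl)
  refine (completeSpace_iff_isComplete_range hiso.isUniformInducing).mpr ?_
  apply IsClosed.isComplete
  have : Set.range (Corner.val : Corner q → A) =
      {x : A | q.val * x = x} ∩ {x : A | x * q.val = x} := by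
    ext x
    constructor
    · rintro ⟨y, rfl⟩; exact ⟨y.meml, y.memr⟩
    · rintro ⟨h1, h2⟩; exact ⟨⟨x, h1, h2⟩, rfl⟩
  rw [this]
  exact ((isClosed_eq (continuous_const.mul continuous_id) continuous_id).inter
    (isClosed_eq (continuous_id.mul continuous_const) continuous_id))

end Corner

end CornerCStar

section CKMap

variable {V E : Type} [Fintype V] [Fintype E] [DecidableEq V] {s r : E → V}
variable {A A' : Type*} [Ring A] [Algebra ℂ A] [StarRing A]
  [Ring A'] [Algebra ℂ A'] [StarRing A']

/-- Push a Cuntz–Krieger family forward along a unital star algebra hom. -/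
def CKFamily.map (ψ : A →⋆ₐ[ℂ] A') (F : CKFamily V E s r A) : CKFamily V E s r A' where
  p v := ψ (F.p v)
  se e := ψ (F.se e)
  proj_idem v := by rw [← map_mul, F.proj_idem]
  proj_star v := by rw [← map_star, F.proj_star]
  orth v w h := by rw [← map_mul, F.orth v w h, map_zero]
  ck1 e := by rw [← map_star, ← map_mul, F.ck1]
  ck2 v h := by
    show ψ (F.p v) = _
    rw [F.ck2 v h, map_sum]
    exact Finset.sum_congr rfl fun e _ => by rw [map_mul, map_star]
  sum_p := by rw [← map_sum, F.sum_p, map_one]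

end CKMap

section CKLemmas

variable {V E : Type} [Fintype V] [Fintype E] [DecidableEq V] {s r : E → V}
variable {B : Type} [NormedRing B] [StarRing B] [CStarRing B] [NormedAlgebra ℂ B]
  [StarModule ℂ B] [CompleteSpace B]

namespace CKFamily

variable [DecidableEq E] (F : CKFamily V E s r B)

lemma se_mul_p (e : E) : F.se e * F.p (s e) = F.se e := by
  have ht := F.ck1 e
  have hp := F.proj_idem (s e)
  have hps := F.proj_star (s e)
  rw [← sub_eq_zero, ← CStarRing.star_mul_self_eq_zero_iff]
  have key : star (F.se e * F.p (s e) - F.se e) * (F.se e * F.p (s e) - F.se e) =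
      F.p (s e) * (star (F.se e) * F.se e) * F.p (s e) -
        F.p (s e) * (star (F.se e) * F.se e) -
        (star (F.se e) * F.se e) * F.p (s e) + star (F.se e) * F.se e := by
    rw [star_sub, star_mul, hps]; noncomm_ring
  rw [key, ht, hp]
  have : F.p (s e) * F.p (s e) = F.p (s e) := hp
  rw [this]
  abel

lemma te_mul_se (e : E) : F.se e * star (F.se e) * F.se e = F.se e := by
  rw [mul_assoc, F.ck1 e, F.se_mul_p e]

lemma p_range_mul_se (e : E) : F.p (r e) * F.se e = F.se e := by
  letI : CStarAlgebra B := { }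
  letI : PartialOrder B := CStarAlgebra.spectralOrder B
  letI : StarOrderedRing B := CStarAlgebra.spectralOrderedRing B
  set t := F.se e with htdef
  set S := F.p (r e) with hSdef
  have hte : t * star t * t = t := F.te_mul_se e
  have hSsa : star S = S := F.proj_star _
  have hSidem : S * S = S := F.proj_idem _
  set T := t * star t with hTdef
  have hTsa : star T = T := by rw [hTdef, star_mul, star_star]
  have hTidem : T * T = T := by rw [hTdef, ← mul_assoc, hte]
  have hsum : S = ∑ f ∈ Finset.univ.filter (fun f => r f = r e),
      F.se f * star (F.se f) := F.ck2 (r e) ⟨e, rfl⟩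
  have hmem : e ∈ Finset.univ.filter (fun f => r f = r e) := by simp
  have hSsplit : T + ∑ f ∈ (Finset.univ.filter (fun f => r f = r e)).erase e,
      F.se f * star (F.se f) = S := by
    rw [hsum]; exact Finset.add_sum_erase _ (fun f => F.se f * star (F.se f)) hmem
  have hle : T ≤ S := by
    rw [← hSsplit]
    refine le_add_of_nonneg_right (Finset.sum_nonneg fun f _ => ?_)
    simpa using star_mul_self_nonneg (star (F.se f))
  have hx : (1 - S) * T = 0 := by
    rw [← CStarRing.star_mul_self_eq_zero_iff]
    have h1 : star ((1 - S) * T) = T * (1 - S) := by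
      rw [star_mul, star_sub, star_one, hSsa, hTsa]
    have h3 : (1 - S) * (1 - S) = 1 - S := by
      rw [sub_mul, one_mul, mul_sub, mul_one, hSidem]; abel
    have h2 : star ((1 - S) * T) * ((1 - S) * T) = T - T * S * T := by
      rw [h1]
      calc T * (1 - S) * ((1 - S) * T) = T * ((1 - S) * (1 - S)) * T := by noncomm_ring
        _ = T * (1 - S) * T := by rw [h3]
        _ = T * T - T * S * T := by noncomm_ring
        _ = T - T * S * T := by rw [hTidem]
    have h4 : T ≤ T * S * T := by
      have := star_left_conjugate_le_conjugate hle T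
      rwa [hTsa, hTidem, hTidem] at this
    have h5 : star ((1 - S) * T) * ((1 - S) * T) ≤ 0 := by
      rw [h2]; exact sub_nonpos.mpr h4
    exact le_antisymm h5 (star_mul_self_nonneg _)
  have hST : S * T = T := by
    have := hx
    rw [sub_mul, one_mul, sub_eq_zero] at this
    exact this.symm
  calc S * t = S * (T * t) := by rw [hte]
    _ = S * T * t := (mul_assoc S T t).symm
    _ = T * t := by rw [hST]
    _ = t := hte

lemma p_mul_se_of_ne {v : V} (e : E) (h : v ≠ r e) : F.p v * F.se e = 0 := by
  calc F.p v * F.se e = F.p v * (F.p (r e) * F.se e) := by rw [F.p_range_mul_se]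
    _ = F.p v * F.p (r e) * F.se e := by rw [mul_assoc]
    _ = 0 := by rw [F.orth v (r e) h, zero_mul]

lemma se_mul_p_of_ne {v : V} (e : E) (h : s e ≠ v) : F.se e * F.p v = 0 := by
  calc F.se e * F.p v = F.se e * F.p (s e) * F.p v := by rw [F.se_mul_p]
    _ = F.se e * (F.p (s e) * F.p v) := by rw [mul_assoc]
    _ = 0 := by rw [F.orth _ _ h, mul_zero]

end CKFamily

end CKLemmas

section CornerHoms

variable {A : Type} [Ring A] [Algebra ℂ A] [StarRing A] [StarModule ℂ A]
variable {R : Type} [Ring R] [Algebra ℂ R] [StarRing R]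

/-- Lift a non-unital morphism landing in a corner to a unital hom into the corner. -/
def Corner.lift (q : Proj A) (f : R → A)
    (hmem : ∀ a, q.val * f a = f a ∧ f a * q.val = f a)
    (h1 : f 1 = q.val)
    (hadd : ∀ a b, f (a + b) = f a + f b)
    (hmul : ∀ a b, f (a * b) = f a * f b)
    (hsmul : ∀ (c : ℂ) a, f (c • a) = c • f a)
    (hstar : ∀ a, f (star a) = star (f a)) : R →⋆ₐ[ℂ] Corner q where
  toFun a := ⟨f a, (hmem a).1, (hmem a).2⟩
  map_one' := by ext; exact h1
  map_mul' a b := by ext; exact hmul a b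
  map_zero' := by
    ext
    have h := hadd 0 0
    rw [add_zero] at h
    exact right_eq_add.mp h
  map_add' a b := by ext; exact hadd a b
  commutes' c := by
    ext
    show f (algebraMap ℂ R c) = c • q.val
    rw [Algebra.algebraMap_eq_smul_one, hsmul, h1]
  map_star' a := by ext; exact hstar a

@[simp] lemma Corner.lift_apply (q : Proj A) (f : R → A) (hmem) (h1) (hadd) (hmul) (hsmul)
    (hstar) (a : R) : (Corner.lift q f hmem h1 hadd hmul hsmul hstar a).val = f a := rfl

/-- Extend a unital hom into a corner to a unital hom on the product with `ℂ`,
sending `(0, 1)` to the complementary projection. -/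
def cornerProdHom (q : Proj A) (φ : R →⋆ₐ[ℂ] Corner q) : (R × ℂ) →⋆ₐ[ℂ] A where
  toFun x := (φ x.1).val + x.2 • (1 - q.val)
  map_one' := by
    show (φ 1).val + (1:ℂ) • (1 - q.val) = 1
    rw [map_one, Corner.val_one, one_smul]
    abel
  map_mul' x y := by
    show (φ (x.1 * y.1)).val + (x.2 * y.2) • (1 - q.val) =
      ((φ x.1).val + x.2 • (1 - q.val)) * ((φ y.1).val + y.2 • (1 - q.val))
    have h1 : (φ x.1).val * (1 - q.val) = 0 := by
      rw [mul_sub, mul_one, (φ x.1).memr, sub_self]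
    have h2 : (1 - q.val) * (φ y.1).val = 0 := by
      rw [sub_mul, one_mul, (φ y.1).meml, sub_self]
    have h3 : (1 - q.val) * (1 - q.val) = 1 - q.val := by
      rw [sub_mul, one_mul, mul_sub, mul_one, q.idem]
      abel
    rw [map_mul, Corner.val_mul, add_mul, mul_add, mul_add, mul_smul_comm, h1, smul_zero,
      add_zero, smul_mul_assoc, h2, smul_zero, zero_add, smul_mul_assoc, mul_smul_comm, h3,
      smul_smul]
  map_zero' := by
    show (φ 0).val + (0:ℂ) • (1 - q.val) = 0
    rw [map_zero, Corner.val_zero, zero_smul, add_zero]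
  map_add' x y := by
    show (φ (x.1 + y.1)).val + (x.2 + y.2) • (1 - q.val) = _
    rw [map_add, Corner.val_add, add_smul]
    abel
  commutes' c := by
    show (φ (algebraMap ℂ R c)).val + c • (1 - q.val) = algebraMap ℂ A c
    rw [AlgHomClass.commutes φ c, Corner.val_algebraMap, smul_sub, Algebra.algebraMap_eq_smul_one]
    abel
  map_star' x := by
    show (φ (star x.1)).val + (star x.2) • (1 - q.val) =
      star ((φ x.1).val + x.2 • (1 - q.val))
    rw [star_add, star_smul, star_sub, star_one, q.sa, map_star, Corner.val_star]

@[simp] lemma cornerProdHom_apply (q : Proj A) (φ : R →⋆ₐ[ℂ] Corner q) (x : R × ℂ) :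
    cornerProdHom q φ x = (φ x.1).val + x.2 • (1 - q.val) := rfl

end CornerHoms

section Reindex

variable {V : Type} [Fintype V] [DecidableEq V] {M : Type*} [AddCommMonoid M]

lemma sum_subtype_set (S : Set V) [DecidablePred (· ∈ S)] (f : V → M) :
    ∑ v : ↥S, f ↑v = ∑ v ∈ Finset.univ.filter (fun v => v ∈ S), f v :=
  (Finset.sum_subtype (Finset.univ.filter (fun v => v ∈ S)) (fun x => by simp) f).symm

lemma sum_subtype_compl (S T : Set V) [DecidablePred (· ∈ S)] [DecidablePred (· ∈ T)]
    (h : ∀ v, v ∉ T → v ∈ S) (f : V → M) :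
    ∑ w ∈ Finset.univ.filter (fun w : ↥S => (w : V) ∉ T), f ↑w =
      ∑ v ∈ Finset.univ.filter (fun v : V => v ∉ T), f v := by
  refine Finset.sum_bij' (fun w _ => (w : V)) (fun v hv => ⟨v, h v (by simpa using hv)⟩)
    ?_ ?_ ?_ ?_ ?_
  · intro w hw
    simp only [Finset.mem_filter, Finset.mem_univ, true_and] at hw ⊢
    exact hw
  · intro v hv
    simp only [Finset.mem_filter, Finset.mem_univ, true_and] at hv ⊢
    exact hv
  · intro w hw
    exact Subtype.ext rfl
  · intro v hv
    rfl
  · intro w hw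
    rfl

end Reindex

section CKSums

variable {V E : Type} [Fintype V] [Fintype E] [DecidableEq V] [DecidableEq E] {s r : E → V}
variable {B : Type} [NormedRing B] [StarRing B] [CStarRing B] [NormedAlgebra ℂ B]
  [StarModule ℂ B] [CompleteSpace B]

namespace CKFamily

variable (F : CKFamily V E s r B)

lemma sum_p_mul_p (t : Finset V) {v : V} (h : v ∈ t) :
    (∑ w ∈ t, F.p w) * F.p v = F.p v := by
  rw [Finset.sum_mul,
    Finset.sum_eq_single v (fun w _ hw => F.orth w v hw) (fun hv => absurd h hv)]
  exact F.proj_idem v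

lemma p_mul_sum_p (t : Finset V) {v : V} (h : v ∈ t) :
    F.p v * ∑ w ∈ t, F.p w = F.p v := by
  rw [Finset.mul_sum,
    Finset.sum_eq_single v (fun w _ hw => F.orth v w (Ne.symm hw)) (fun hv => absurd h hv)]
  exact F.proj_idem v

lemma sum_p_idem (t : Finset V) :
    (∑ w ∈ t, F.p w) * ∑ w ∈ t, F.p w = ∑ w ∈ t, F.p w := by
  rw [Finset.sum_mul]
  exact Finset.sum_congr rfl fun v hv => F.p_mul_sum_p t hv

lemma sum_p_star (t : Finset V) : star (∑ w ∈ t, F.p w) = ∑ w ∈ t, F.p w := by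
  rw [star_sum]
  exact Finset.sum_congr rfl fun v _ => F.proj_star v

lemma sum_p_mul_se (t : Finset V) (e : E) (h : r e ∈ t) :
    (∑ w ∈ t, F.p w) * F.se e = F.se e := by
  rw [Finset.sum_mul,
    Finset.sum_eq_single (r e) (fun w _ hw => F.p_mul_se_of_ne e hw) (fun hv => absurd h hv)]
  exact F.p_range_mul_se e

lemma se_mul_sum_p (t : Finset V) (e : E) (h : s e ∈ t) :
    F.se e * ∑ w ∈ t, F.p w = F.se e := by
  rw [Finset.mul_sum,
    Finset.sum_eq_single (s e) (fun w _ hw => F.se_mul_p_of_ne e (Ne.symm hw))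
      (fun hv => absurd h hv)]
  exact F.se_mul_p e

end CKFamily

end CKSums

/-- Let `G = G₁ ∪ G₂` with finitely many vertices, where `G₁`, `G₂` have vertex
sets `V₁, V₂` with `V₁ ∪ V₂ = G⁰` and `V₂ ≠ G⁰`, disjoint edge sets `E₁, E₂`,
no edge of `G₂` entering `G₁`, and `n` shared vertices (enumerated by `ι`).
Then `C*(G) ≅ (C*(G₁) ⊕ ℂ) *_{ℂ^{n+2}} (C*(G₂) ⊕ ℂ)`, amalgamated via
`θ₁(λ₁,...,λ_{n+2}) = (Σᵢ λᵢ p̄ᵢ + λ_{n+1} Σ_α p̄_α, λ_{n+2})` and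
`θ₂(λ₁,...,λ_{n+2}) = (Σᵢ λᵢ p̿ᵢ + λ_{n+2} Σ_β p̿_β, λ_{n+1})`. -/
theorem graph_algebra_iso_amalgam_case2
    (V : Type) [Fintype V] [DecidableEq V]
    (V₁ V₂ : Set V) [DecidablePred (· ∈ V₁)] [DecidablePred (· ∈ V₂)]
    (hcover : V₁ ∪ V₂ = Set.univ) (hV₂ : V₂ ≠ Set.univ)
    (E₁ E₂ : Type) [Fintype E₁] [Fintype E₂]
    (s₁ r₁ : E₁ → ↥V₁) (s₂ r₂ : E₂ → ↥V₂)
    (hnoenter : ∀ e : E₂, (r₂ e : V) ∉ V₁)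
    -- C*(G₁)
    (CA₁ : Type) [NormedRing CA₁] [StarRing CA₁] [CStarRing CA₁]
    [NormedAlgebra ℂ CA₁] [StarModule ℂ CA₁] [CompleteSpace CA₁]
    (F₁ : CKFamily ↥V₁ E₁ s₁ r₁ CA₁) (hF₁ : IsUniversalCKFamily ↥V₁ E₁ s₁ r₁ CA₁ F₁)
    -- C*(G₂)
    (CA₂ : Type) [NormedRing CA₂] [StarRing CA₂] [CStarRing CA₂]
    [NormedAlgebra ℂ CA₂] [StarModule ℂ CA₂] [CompleteSpace CA₂]
    (F₂ : CKFamily ↥V₂ E₂ s₂ r₂ CA₂) (hF₂ : IsUniversalCKFamily ↥V₂ E₂ s₂ r₂ CA₂ F₂)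
    -- C*(G)
    (CG : Type) [NormedRing CG] [StarRing CG] [CStarRing CG]
    [NormedAlgebra ℂ CG] [StarModule ℂ CG] [CompleteSpace CG]
    (F : CKFamily V (E₁ ⊕ E₂) (Sum.elim (fun e => (s₁ e : V)) (fun e => (s₂ e : V)))
      (Sum.elim (fun e => (r₁ e : V)) (fun e => (r₂ e : V))) CG)
    (hF : IsUniversalCKFamily V (E₁ ⊕ E₂)
      (Sum.elim (fun e => (s₁ e : V)) (fun e => (s₂ e : V)))
      (Sum.elim (fun e => (r₁ e : V)) (fun e => (r₂ e : V))) CG F)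
    -- the amalgamation data over ℂ^{n+2}
    (n : ℕ) (ι : Fin n ≃ ↥(V₁ ∩ V₂))
    (θ₁ : (Fin (n + 2) → ℂ) →⋆ₐ[ℂ] (CA₁ × ℂ))
    (hθ₁ : ∀ l : Fin (n + 2) → ℂ,
      θ₁ l = (∑ i : Fin n, l i.castSucc.castSucc • F₁.p ⟨(ι i : V), (ι i).2.1⟩ +
          l (Fin.castSucc (Fin.last n)) •
            ∑ v ∈ Finset.univ.filter (fun v : ↥V₁ => (v : V) ∉ V₂), F₁.p v,
        l (Fin.last (n + 1))))
    (θ₂ : (Fin (n + 2) → ℂ) →⋆ₐ[ℂ] (CA₂ × ℂ))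
    (hθ₂ : ∀ l : Fin (n + 2) → ℂ,
      θ₂ l = (∑ i : Fin n, l i.castSucc.castSucc • F₂.p ⟨(ι i : V), (ι i).2.2⟩ +
          l (Fin.last (n + 1)) •
            ∑ v ∈ Finset.univ.filter (fun v : ↥V₂ => (v : V) ∉ V₁), F₂.p v,
        l (Fin.castSucc (Fin.last n))))
    -- the amalgamated free product  (C*(G₁) ⊕ ℂ) *_{ℂ^{n+2}} (C*(G₂) ⊕ ℂ)
    (P : Type) [NormedRing P] [StarRing P] [CStarRing P] [NormedAlgebra ℂ P]
    [StarModule ℂ P] [CompleteSpace P]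
    (i₁ : (CA₁ × ℂ) →⋆ₐ[ℂ] P) (i₂ : (CA₂ × ℂ) →⋆ₐ[ℂ] P)
    (hP : IsAmalgamatedFreeProduct θ₁ θ₂ i₁ i₂) :
    ∃ φ : P ≃⋆ₐ[ℂ] CG,
      (∀ v : ↥V₁, φ (i₁ (F₁.p v, 0)) = F.p (v : V)) ∧
      (∀ e : E₁, φ (i₁ (F₁.se e, 0)) = F.se (Sum.inl e)) ∧
      (φ (i₁ (0, 1)) = ∑ v ∈ Finset.univ.filter (fun v : V => v ∉ V₁), F.p v) ∧
      (∀ v : ↥V₂, φ (i₂ (F₂.p v, 0)) = F.p (v : V)) ∧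
      (∀ e : E₂, φ (i₂ (F₂.se e, 0)) = F.se (Sum.inr e)) ∧
      (φ (i₂ (0, 1)) = ∑ v ∈ Finset.univ.filter (fun v : V => v ∉ V₂), F.p v) := by
  classical
  -- basic covering facts
  have hcov : ∀ v : V, v ∈ V₁ ∨ v ∈ V₂ := fun v => by
    have : v ∈ V₁ ∪ V₂ := by rw [hcover]; trivial
    exact this
  have hmem2 : ∀ v : V, v ∉ V₁ → v ∈ V₂ := fun v h => (hcov v).resolve_left h
  have hmem1 : ∀ v : V, v ∉ V₂ → v ∈ V₁ := fun v h => (hcov v).resolve_right h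
  -- the vertex projections in CG associated to V₁ and V₂
  set t₁ : Finset V := Finset.univ.filter (fun v => v ∈ V₁) with ht₁
  set t₂ : Finset V := Finset.univ.filter (fun v => v ∈ V₂) with ht₂
  let q₁ : Proj CG := ⟨∑ w ∈ t₁, F.p w, F.sum_p_idem t₁, F.sum_p_star t₁⟩
  let q₂ : Proj CG := ⟨∑ w ∈ t₂, F.p w, F.sum_p_idem t₂, F.sum_p_star t₂⟩
  have hsplit1 : (∑ w ∈ t₁, F.p w) + ∑ w ∈ Finset.univ.filter (fun v : V => v ∉ V₁), F.p w
      = 1 := by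
    rw [ht₁, Finset.sum_filter_add_sum_filter_not Finset.univ _ F.p, F.sum_p]
  have hsplit2 : (∑ w ∈ t₂, F.p w) + ∑ w ∈ Finset.univ.filter (fun v : V => v ∉ V₂), F.p w
      = 1 := by
    rw [ht₂, Finset.sum_filter_add_sum_filter_not Finset.univ _ F.p, F.sum_p]
  have hq1c : 1 - q₁.val = ∑ w ∈ Finset.univ.filter (fun v : V => v ∉ V₁), F.p w := by
    rw [← hsplit1]; abel
  have hq2c : 1 - q₂.val = ∑ w ∈ Finset.univ.filter (fun v : V => v ∉ V₂), F.p w := by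
    rw [← hsplit2]; abel
  -- edge sums over the big graph localize
  have hsum_inl : ∀ (M : Type) [AddCommMonoid M] (v : ↥V₁) (g : E₁ ⊕ E₂ → M),
      ∑ e ∈ Finset.univ.filter
        (fun e => Sum.elim (fun e => (r₁ e : V)) (fun e => (r₂ e : V)) e = ↑v), g e =
      ∑ e ∈ Finset.univ.filter (fun e => r₁ e = v), g (Sum.inl e) := by
    intro M _ v g
    rw [Finset.sum_filter, Finset.sum_filter, Fintype.sum_sum_type]
    simp only [Sum.elim_inl, Sum.elim_inr]
    have hA : ∀ e₂ : E₂, ¬((r₂ e₂ : V) = ↑v) := fun e₂ h => hnoenter e₂ (h ▸ v.2)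
    simp only [hA, ↓reduceIte, Finset.sum_const_zero, add_zero]
    simp only [Subtype.coe_inj]
  have hsum_inr : ∀ (M : Type) [AddCommMonoid M] (v : ↥V₂), (↑v ∉ V₁) →
      ∀ (g : E₁ ⊕ E₂ → M),
      ∑ e ∈ Finset.univ.filter
        (fun e => Sum.elim (fun e => (r₁ e : V)) (fun e => (r₂ e : V)) e = ↑v), g e =
      ∑ e ∈ Finset.univ.filter (fun e => r₂ e = v), g (Sum.inr e) := by
    intro M _ v hv g
    rw [Finset.sum_filter, Finset.sum_filter, Fintype.sum_sum_type]
    simp only [Sum.elim_inl, Sum.elim_inr]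
    have hA : ∀ e₁ : E₁, ¬((r₁ e₁ : V) = ↑v) := fun e₁ h => hv (h ▸ (r₁ e₁).2)
    simp only [hA, ↓reduceIte, Finset.sum_const_zero, zero_add]
    simp only [Subtype.coe_inj]
  -- the Cuntz-Krieger G₁-family in the corner of CG at q₁
  let Qc₁ : CKFamily ↥V₁ E₁ s₁ r₁ (Corner q₁) :=
  { p := fun v => ⟨F.p ↑v, F.sum_p_mul_p t₁ (by simp [ht₁, v.2]),
      F.p_mul_sum_p t₁ (by simp [ht₁, v.2])⟩
    se := fun e => ⟨F.se (Sum.inl e),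
      F.sum_p_mul_se t₁ (Sum.inl e) (by simp [ht₁, (r₁ e).2]),
      F.se_mul_sum_p t₁ (Sum.inl e) (by simp [ht₁, (s₁ e).2])⟩
    proj_idem := fun v => by ext; exact F.proj_idem ↑v
    proj_star := fun v => by ext; exact F.proj_star ↑v
    orth := fun v w h => by ext; exact F.orth ↑v ↑w (Subtype.coe_injective.ne h)
    ck1 := fun e => by ext; exact F.ck1 (Sum.inl e)
    ck2 := fun v hv => by
      obtain ⟨e₀, he₀⟩ := hv
      ext
      rw [Corner.val_sum]
      show F.p ↑v = _
      have := F.ck2 ↑v ⟨Sum.inl e₀, by simp [he₀]⟩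
      rw [this, hsum_inl CG v (fun e => F.se e * star (F.se e))]
      rfl
    sum_p := by
      ext
      rw [Corner.val_sum, Corner.val_one]
      show ∑ v : ↥V₁, F.p ↑v = q₁.val
      rw [sum_subtype_set V₁ F.p]
    }
  -- the Cuntz-Krieger G₂-family in the corner of CG at q₂
  let Qc₂ : CKFamily ↥V₂ E₂ s₂ r₂ (Corner q₂) :=
  { p := fun v => ⟨F.p ↑v, F.sum_p_mul_p t₂ (by simp [ht₂, v.2]),
      F.p_mul_sum_p t₂ (by simp [ht₂, v.2])⟩
    se := fun e => ⟨F.se (Sum.inr e),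
      F.sum_p_mul_se t₂ (Sum.inr e) (by simp [ht₂, (r₂ e).2]),
      F.se_mul_sum_p t₂ (Sum.inr e) (by simp [ht₂, (s₂ e).2])⟩
    proj_idem := fun v => by ext; exact F.proj_idem ↑v
    proj_star := fun v => by ext; exact F.proj_star ↑v
    orth := fun v w h => by ext; exact F.orth ↑v ↑w (Subtype.coe_injective.ne h)
    ck1 := fun e => by ext; exact F.ck1 (Sum.inr e)
    ck2 := fun v hv => by
      obtain ⟨e₀, he₀⟩ := hv
      ext
      rw [Corner.val_sum]
      have hv1 : (v : V) ∉ V₁ := by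
        have : r₂ e₀ = v := he₀
        exact this ▸ hnoenter e₀
      have := F.ck2 ↑v ⟨Sum.inr e₀, by simp [he₀]⟩
      show F.p ↑v = _
      rw [this, hsum_inr CG v hv1 (fun e => F.se e * star (F.se e))]
      rfl
    sum_p := by
      ext
      rw [Corner.val_sum, Corner.val_one]
      show ∑ v : ↥V₂, F.p ↑v = q₂.val
      rw [sum_subtype_set V₂ F.p]
    }
  obtain ⟨φ₁, ⟨hφ₁p, hφ₁se⟩, -⟩ := hF₁ (Corner q₁) Qc₁
  obtain ⟨φ₂, ⟨hφ₂p, hφ₂se⟩, -⟩ := hF₂ (Corner q₂) Qc₂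
  have hφ₁pv : ∀ v : ↥V₁, (φ₁ (F₁.p v)).val = F.p ↑v := fun v => by rw [hφ₁p v]
  have hφ₁sev : ∀ e : E₁, (φ₁ (F₁.se e)).val = F.se (Sum.inl e) := fun e => by rw [hφ₁se e]
  have hφ₂pv : ∀ v : ↥V₂, (φ₂ (F₂.p v)).val = F.p ↑v := fun v => by rw [hφ₂p v]
  have hφ₂sev : ∀ e : E₂, (φ₂ (F₂.se e)).val = F.se (Sum.inr e) := fun e => by rw [hφ₂se e]
  -- the two legs into CG
  let π₁ : (CA₁ × ℂ) →⋆ₐ[ℂ] CG := cornerProdHom q₁ φ₁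
  let π₂ : (CA₂ × ℂ) →⋆ₐ[ℂ] CG := cornerProdHom q₂ φ₂
  have hcompat : π₁.comp θ₁ = π₂.comp θ₂ := by
    apply StarAlgHom.ext
    intro l
    rw [StarAlgHom.comp_apply, StarAlgHom.comp_apply, hθ₁ l, hθ₂ l]
    show (φ₁ _).val + _ • (1 - q₁.val) = (φ₂ _).val + _ • (1 - q₂.val)
    simp only [map_add, map_sum, map_smul, Corner.val_add, Corner.val_sum, Corner.val_smul,
      hφ₁pv, hφ₂pv]
    rw [hq1c, hq2c, sum_subtype_compl V₁ V₂ hmem1 F.p, sum_subtype_compl V₂ V₁ hmem2 F.p,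
      add_right_comm]
  obtain ⟨π, ⟨hπ1, hπ2⟩, -⟩ := hP.2 CG π₁ π₂ hcompat
  have hπ1' : ∀ x, π (i₁ x) = π₁ x := fun x => by
    rw [← StarAlgHom.comp_apply, hπ1]
  have hπ2' : ∀ x, π (i₂ x) = π₂ x := fun x => by
    rw [← StarAlgHom.comp_apply, hπ2]
  -- key consequences of the amalgamation relations
  have key0 : ∀ l, i₁ (θ₁ l) = i₂ (θ₂ l) := fun l => by
    rw [← StarAlgHom.comp_apply, ← StarAlgHom.comp_apply, hP.1]
  have keyP : ∀ (v : V) (h₁ : v ∈ V₁) (h₂ : v ∈ V₂),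
      i₁ (F₁.p ⟨v, h₁⟩, 0) = i₂ (F₂.p ⟨v, h₂⟩, 0) := by
    intro v h₁ h₂
    set j : Fin n := ι.symm ⟨v, h₁, h₂⟩ with hj
    have hιj : ι j = ⟨v, h₁, h₂⟩ := ι.apply_symm_apply _
    have h0 := key0 (Pi.single j.castSucc.castSucc 1)
    rw [hθ₁, hθ₂] at h0
    have hcc : ∀ i : Fin n, (Pi.single j.castSucc.castSucc (1:ℂ) : Fin (n+2) → ℂ) i.castSucc.castSucc
        = if i = j then 1 else 0 := by
      intro i
      rcases eq_or_ne i j with rfl | hij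
      · simp
      · rw [if_neg hij]
        have hne : i.castSucc.castSucc ≠ j.castSucc.castSucc := by
          simpa [Fin.castSucc_inj] using hij
        exact Pi.single_eq_of_ne hne 1
    have hlastA : (Pi.single j.castSucc.castSucc (1:ℂ) : Fin (n+2) → ℂ) (Fin.castSucc (Fin.last n)) = 0 := by
      have hne : Fin.castSucc (Fin.last n) ≠ j.castSucc.castSucc := by
        simpa [Fin.castSucc_inj] using (Fin.castSucc_lt_last j).ne'
      exact Pi.single_eq_of_ne hne 1
    have hlastB : (Pi.single j.castSucc.castSucc (1:ℂ) : Fin (n+2) → ℂ) (Fin.last (n + 1)) = 0 := by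
      exact Pi.single_eq_of_ne (Fin.castSucc_lt_last j.castSucc).ne' 1
    have hs1 : ∑ i : Fin n, (Pi.single j.castSucc.castSucc (1:ℂ) : Fin (n+2) → ℂ) i.castSucc.castSucc
        • F₁.p ⟨(ι i : V), (ι i).2.1⟩ = F₁.p ⟨v, h₁⟩ := by
      rw [Fintype.sum_eq_single j (fun i hij => by rw [hcc i, if_neg hij, zero_smul])]
      rw [hcc j, if_pos rfl, one_smul]
      have : (⟨(ι j : V), (ι j).2.1⟩ : ↥V₁) = ⟨v, h₁⟩ := Subtype.ext (by rw [hιj])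
      rw [this]
    have hs2 : ∑ i : Fin n, (Pi.single j.castSucc.castSucc (1:ℂ) : Fin (n+2) → ℂ) i.castSucc.castSucc
        • F₂.p ⟨(ι i : V), (ι i).2.2⟩ = F₂.p ⟨v, h₂⟩ := by
      rw [Fintype.sum_eq_single j (fun i hij => by rw [hcc i, if_neg hij, zero_smul])]
      rw [hcc j, if_pos rfl, one_smul]
      have : (⟨(ι j : V), (ι j).2.2⟩ : ↥V₂) = ⟨v, h₂⟩ := Subtype.ext (by rw [hιj])
      rw [this]
    rw [hs1, hs2, hlastA, hlastB, zero_smul, zero_smul, add_zero, add_zero] at h0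
    exact h0
  have keyR1 : i₁ (∑ v ∈ Finset.univ.filter (fun v : ↥V₁ => (v : V) ∉ V₂), F₁.p v, 0)
      = i₂ (0, 1) := by
    have h0 := key0 (Pi.single (Fin.castSucc (Fin.last n)) 1)
    rw [hθ₁, hθ₂] at h0
    have hcc : ∀ i : Fin n, (Pi.single (Fin.castSucc (Fin.last n)) (1:ℂ) : Fin (n+2) → ℂ) i.castSucc.castSucc
        = 0 := by
      intro i
      have hne : i.castSucc.castSucc ≠ Fin.castSucc (Fin.last n) := by
        simpa [Fin.castSucc_inj] using (Fin.castSucc_lt_last i).ne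
      exact Pi.single_eq_of_ne hne 1
    have hlastA : (Pi.single (Fin.castSucc (Fin.last n)) (1:ℂ) : Fin (n+2) → ℂ) (Fin.castSucc (Fin.last n))
        = 1 := Pi.single_eq_same _ 1
    have hlastB : (Pi.single (Fin.castSucc (Fin.last n)) (1:ℂ) : Fin (n+2) → ℂ) (Fin.last (n + 1)) = 0 := by
      exact Pi.single_eq_of_ne (Fin.castSucc_lt_last (Fin.last n)).ne' 1
    simp only [hcc, hlastA, hlastB, zero_smul, one_smul, zero_add, add_zero,
      Finset.sum_const_zero] at h0
    exact h0
  have keyR2 : (i₁ (0, 1) : P)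
      = i₂ (∑ v ∈ Finset.univ.filter (fun v : ↥V₂ => (v : V) ∉ V₁), F₂.p v, 0) := by
    have h0 := key0 (Pi.single (Fin.last (n + 1)) 1)
    rw [hθ₁, hθ₂] at h0
    have hcc : ∀ i : Fin n, (Pi.single (Fin.last (n + 1)) (1:ℂ) : Fin (n+2) → ℂ) i.castSucc.castSucc
        = 0 := by
      intro i
      exact Pi.single_eq_of_ne (Fin.castSucc_lt_last i.castSucc).ne 1
    have hlastA : (Pi.single (Fin.last (n + 1)) (1:ℂ) : Fin (n+2) → ℂ) (Fin.castSucc (Fin.last n)) = 0 := by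
      exact Pi.single_eq_of_ne (Fin.castSucc_lt_last (Fin.last n)).ne 1
    have hlastB : (Pi.single (Fin.last (n + 1)) (1:ℂ) : Fin (n+2) → ℂ) (Fin.last (n + 1)) = 1 :=
      Pi.single_eq_same _ 1
    simp only [hcc, hlastA, hlastB, zero_smul, one_smul, zero_add, add_zero,
      Finset.sum_const_zero] at h0
    exact h0
  -- pair arithmetic helpers
  have hpm1 : ∀ a b : CA₁, ((a, 0) : CA₁ × ℂ) * (b, 0) = (a * b, 0) := fun a b => by
    rw [Prod.mk_mul_mk, mul_zero]
  have hpm2 : ∀ a b : CA₂, ((a, 0) : CA₂ × ℂ) * (b, 0) = (a * b, 0) := fun a b => by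
    rw [Prod.mk_mul_mk, mul_zero]
  have hps1 : ∀ a : CA₁, star ((a, 0) : CA₁ × ℂ) = (star a, 0) := fun a => by
    rw [Prod.star_def, star_zero]
  have hps2 : ∀ a : CA₂, star ((a, 0) : CA₂ × ℂ) = (star a, 0) := fun a => by
    rw [Prod.star_def, star_zero]
  have hpair1 : ∀ {γ : Type} (t : Finset γ) (f : γ → CA₁),
      ∑ e ∈ t, ((f e, 0) : CA₁ × ℂ) = (∑ e ∈ t, f e, 0) := by
    intro γ t f
    exact (map_sum (AddMonoidHom.inl CA₁ ℂ) f t).symm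
  have hpair2 : ∀ {γ : Type} (t : Finset γ) (f : γ → CA₂),
      ∑ e ∈ t, ((f e, 0) : CA₂ × ℂ) = (∑ e ∈ t, f e, 0) := by
    intro γ t f
    exact (map_sum (AddMonoidHom.inl CA₂ ℂ) f t).symm
  -- the vertex projections and edge elements of the G-family in P
  set Qp : V → P := fun v =>
    if h : v ∈ V₁ then i₁ (F₁.p ⟨v, h⟩, 0) else i₂ (F₂.p ⟨v, hmem2 v h⟩, 0) with hQpdef
  have hQp1 : ∀ (v : V) (h : v ∈ V₁), Qp v = i₁ (F₁.p ⟨v, h⟩, 0) := fun v h => dif_pos h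
  have hQp2 : ∀ (v : V) (h : v ∉ V₁), Qp v = i₂ (F₂.p ⟨v, hmem2 v h⟩, 0) :=
    fun v h => dif_neg h
  have hQpc : ∀ (v : V) (h : v ∈ V₂), Qp v = i₂ (F₂.p ⟨v, h⟩, 0) := by
    intro v h
    by_cases h1 : v ∈ V₁
    · rw [hQp1 v h1]; exact keyP v h1 h
    · rw [hQp2 v h1]
  have hQp1' : ∀ w : ↥V₁, Qp ↑w = i₁ (F₁.p w, 0) := fun w => hQp1 ↑w w.2
  have hQpc' : ∀ w : ↥V₂, Qp ↑w = i₂ (F₂.p w, 0) := fun w => hQpc ↑w w.2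
  set Qse : E₁ ⊕ E₂ → P :=
    Sum.elim (fun e => i₁ (F₁.se e, 0)) (fun e => i₂ (F₂.se e, 0)) with hQsedef
  -- the two basic sums of the Q-projections
  have hQsum1 : ∑ w ∈ t₁, Qp w = i₁ (1, 0) := by
    rw [ht₁, ← sum_subtype_set V₁ Qp,
      Finset.sum_congr rfl (fun (w : ↥V₁) _ => hQp1' w), ← map_sum, hpair1, F₁.sum_p]
  have hQsum2 : ∑ w ∈ t₂, Qp w = i₂ (1, 0) := by
    rw [ht₂, ← sum_subtype_set V₂ Qp,
      Finset.sum_congr rfl (fun (w : ↥V₂) _ => hQpc' w), ← map_sum, hpair2, F₂.sum_p]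
  have hQsum2c : ∑ w ∈ Finset.univ.filter (fun v : V => v ∉ V₁), Qp w = i₁ (0, 1) := by
    rw [← sum_subtype_compl V₂ V₁ hmem2 Qp,
      Finset.sum_congr rfl (fun (w : ↥V₂) _ => hQpc' w), ← map_sum, hpair2]
    exact keyR2.symm
  -- the Cuntz-Krieger G-family in P
  let Q : CKFamily V (E₁ ⊕ E₂) (Sum.elim (fun e => (s₁ e : V)) (fun e => (s₂ e : V)))
      (Sum.elim (fun e => (r₁ e : V)) (fun e => (r₂ e : V))) P :=
  { p := Qp
    se := Qse
    proj_idem := fun v => by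
      by_cases h : v ∈ V₁
      · rw [hQp1 v h, ← map_mul, hpm1, F₁.proj_idem]
      · rw [hQp2 v h, ← map_mul, hpm2, F₂.proj_idem]
    proj_star := fun v => by
      by_cases h : v ∈ V₁
      · rw [hQp1 v h, ← map_star, hps1, F₁.proj_star]
      · rw [hQp2 v h, ← map_star, hps2, F₂.proj_star]
    orth := fun v w hvw => by
      by_cases hv : v ∈ V₁ <;> by_cases hw : w ∈ V₁
      · rw [hQp1 v hv, hQp1 w hw, ← map_mul, hpm1,
          F₁.orth ⟨v, hv⟩ ⟨w, hw⟩ (fun hc => hvw (congrArg Subtype.val hc))]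
        exact map_zero i₁
      · rw [hQp1 v hv, hQp2 w hw]
        have habs : i₂ ((F₂.p ⟨w, hmem2 w hw⟩ : CA₂), (0:ℂ))
            = i₁ ((0 : CA₁), (1:ℂ)) * i₂ (F₂.p ⟨w, hmem2 w hw⟩, 0) := by
          rw [keyR2, ← map_mul, hpm2,
            F₂.sum_p_mul_p (Finset.univ.filter (fun u : ↥V₂ => (u : V) ∉ V₁))
              (by simpa using hw)]
        rw [habs, ← mul_assoc, ← map_mul]
        have hz : ((F₁.p ⟨v, hv⟩, 0) : CA₁ × ℂ) * (0, 1) = 0 := by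
          rw [Prod.mk_mul_mk, mul_zero, zero_mul]
          rfl
        rw [hz, map_zero, zero_mul]
      · rw [hQp2 v hv, hQp1 w hw]
        have habs : i₂ ((F₂.p ⟨v, hmem2 v hv⟩ : CA₂), (0:ℂ))
            = i₂ (F₂.p ⟨v, hmem2 v hv⟩, 0) * i₁ ((0 : CA₁), (1:ℂ)) := by
          rw [keyR2, ← map_mul, hpm2,
            F₂.p_mul_sum_p (Finset.univ.filter (fun u : ↥V₂ => (u : V) ∉ V₁))
              (by simpa using hv)]
        rw [habs, mul_assoc, ← map_mul]
        have hz : ((0 : CA₁), (1:ℂ)) * (F₁.p ⟨w, hw⟩, 0) = 0 := by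
          rw [Prod.mk_mul_mk, zero_mul, mul_zero]
          rfl
        rw [hz, map_zero, mul_zero]
      · rw [hQp2 v hv, hQp2 w hw, ← map_mul, hpm2,
          F₂.orth ⟨v, hmem2 v hv⟩ ⟨w, hmem2 w hw⟩ (fun hc => hvw (congrArg Subtype.val hc))]
        exact map_zero i₂
    ck1 := fun e => by
      cases e with
      | inl e =>
        show star (i₁ (F₁.se e, 0)) * i₁ (F₁.se e, 0) = Qp ↑(s₁ e)
        rw [hQp1' (s₁ e), ← map_star, hps1, ← map_mul, hpm1, F₁.ck1]
      | inr e =>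
        show star (i₂ (F₂.se e, 0)) * i₂ (F₂.se e, 0) = Qp ↑(s₂ e)
        rw [hQpc' (s₂ e), ← map_star, hps2, ← map_mul, hpm2, F₂.ck1]
    ck2 := fun v hv => by
      by_cases h : v ∈ V₁
      · obtain ⟨e₀, he₀⟩ := hv
        obtain ⟨e₁, he₁⟩ : ∃ e₁ : E₁, r₁ e₁ = ⟨v, h⟩ := by
          cases e₀ with
          | inl e₁ => exact ⟨e₁, Subtype.ext he₀⟩
          | inr e₂ => exact absurd h (he₀ ▸ hnoenter e₂)
        rw [hQp1 v h, hsum_inl P ⟨v, h⟩ (fun e => Qse e * star (Qse e))]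
        have hterm : ∀ e : E₁, Qse (Sum.inl e) * star (Qse (Sum.inl e))
            = i₁ (F₁.se e * star (F₁.se e), 0) := fun e => by
          show i₁ (F₁.se e, 0) * star (i₁ (F₁.se e, 0)) = _
          rw [← map_star, hps1, ← map_mul, hpm1]
        rw [Finset.sum_congr rfl (fun e _ => hterm e), ← map_sum, hpair1,
          ← F₁.ck2 ⟨v, h⟩ ⟨e₁, he₁⟩]
      · obtain ⟨e₀, he₀⟩ := hv
        have h2 : v ∈ V₂ := hmem2 v h
        obtain ⟨e₂, he₂⟩ : ∃ e₂ : E₂, r₂ e₂ = ⟨v, h2⟩ := by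
          cases e₀ with
          | inl e₁ => exact absurd (he₀ ▸ (r₁ e₁).2) h
          | inr e₂ => exact ⟨e₂, Subtype.ext he₀⟩
        rw [hQp2 v h, hsum_inr P ⟨v, h2⟩ h (fun e => Qse e * star (Qse e))]
        have hterm : ∀ e : E₂, Qse (Sum.inr e) * star (Qse (Sum.inr e))
            = i₂ (F₂.se e * star (F₂.se e), 0) := fun e => by
          show i₂ (F₂.se e, 0) * star (i₂ (F₂.se e, 0)) = _
          rw [← map_star, hps2, ← map_mul, hpm2]
        rw [Finset.sum_congr rfl (fun e _ => hterm e), ← map_sum, hpair2,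
          ← F₂.ck2 ⟨v, h2⟩ ⟨e₂, he₂⟩]
    sum_p := by
      rw [← Finset.sum_filter_add_sum_filter_not Finset.univ (fun v : V => v ∈ V₁) Qp,
        ← ht₁, hQsum1, hQsum2c, ← map_add]
      have : ((1 : CA₁), (0:ℂ)) + (0, 1) = 1 := by
        rw [Prod.mk_add_mk, add_zero, zero_add]
        rfl
      rw [this, map_one] }
  have hQse1 : ∀ e : E₁, Q.se (Sum.inl e) = i₁ (F₁.se e, 0) := fun e => rfl
  have hQse2 : ∀ e : E₂, Q.se (Sum.inr e) = i₂ (F₂.se e, 0) := fun e => rfl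
  have hQpQ : ∀ v : V, Q.p v = Qp v := fun v => rfl
  obtain ⟨π', ⟨hπ'p, hπ'se⟩, -⟩ := hF P Q
  -- π ∘ π' = id on CG
  have hforward : ∀ x : CG, π (π' x) = x := by
    obtain ⟨ψ, -, hψuniq⟩ := hF CG F
    have hc1 : π.comp π' = ψ := by
      apply hψuniq
      constructor
      · intro v
        rw [StarAlgHom.comp_apply, hπ'p v, hQpQ v]
        by_cases h : v ∈ V₁
        · rw [hQp1 v h, hπ1' _]
          show (φ₁ (F₁.p ⟨v, h⟩)).val + (0:ℂ) • (1 - q₁.val) = F.p v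
          rw [hφ₁pv, zero_smul, add_zero]
        · rw [hQp2 v h, hπ2' _]
          show (φ₂ (F₂.p ⟨v, hmem2 v h⟩)).val + (0:ℂ) • (1 - q₂.val) = F.p v
          rw [hφ₂pv, zero_smul, add_zero]
      · intro e
        rw [StarAlgHom.comp_apply, hπ'se e]
        cases e with
        | inl e =>
          rw [hQse1 e, hπ1' _]
          show (φ₁ (F₁.se e)).val + (0:ℂ) • (1 - q₁.val) = F.se (Sum.inl e)
          rw [hφ₁sev, zero_smul, add_zero]
        | inr e =>
          rw [hQse2 e, hπ2' _]
          show (φ₂ (F₂.se e)).val + (0:ℂ) • (1 - q₂.val) = F.se (Sum.inr e)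
          rw [hφ₂sev, zero_smul, add_zero]
    have hc2 : StarAlgHom.id ℂ CG = ψ := hψuniq _ ⟨fun v => rfl, fun e => rfl⟩
    intro x
    have h := congrArg (fun f : CG →⋆ₐ[ℂ] CG => f x) (hc1.trans hc2.symm)
    simpa using h
  -- π' carries the corner projections back
  have hq1P : π' q₁.val = i₁ (1, 0) := by
    show π' (∑ w ∈ t₁, F.p w) = i₁ (1, 0)
    rw [map_sum, Finset.sum_congr rfl (fun w _ => (hπ'p w).trans (hQpQ w)), hQsum1]
  have hq2P : π' q₂.val = i₂ (1, 0) := by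
    show π' (∑ w ∈ t₂, F.p w) = i₂ (1, 0)
    rw [map_sum, Finset.sum_congr rfl (fun w _ => (hπ'p w).trans (hQpQ w)), hQsum2]
  -- the corner of P at i₁ (1, 0) and the two liftings
  let qP₁ : Proj P := ⟨i₁ (1, 0), by rw [← map_mul, hpm1, one_mul],
    by rw [← map_star, hps1, star_one]⟩
  let ψa₁ : CA₁ →⋆ₐ[ℂ] Corner qP₁ := Corner.lift qP₁ (fun a => i₁ (a, 0))
    (fun a => ⟨by rw [← map_mul, hpm1, one_mul], by rw [← map_mul, hpm1, mul_one]⟩)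
    rfl
    (fun a b => by rw [← map_add]; congr 1; rw [Prod.mk_add_mk, add_zero])
    (fun a b => by rw [← map_mul, hpm1])
    (fun c a => by rw [← map_smul]; congr 1; rw [Prod.smul_mk, smul_zero])
    (fun a => by rw [← map_star, hps1])
  let ψb₁ : CA₁ →⋆ₐ[ℂ] Corner qP₁ := Corner.lift qP₁ (fun a => π' ((φ₁ a).val))
    (fun a => ⟨by
        show i₁ ((1:CA₁), (0:ℂ)) * π' ((φ₁ a).val) = π' ((φ₁ a).val)
        rw [← hq1P, ← map_mul, (φ₁ a).meml], by
        show π' ((φ₁ a).val) * i₁ ((1:CA₁), (0:ℂ)) = π' ((φ₁ a).val)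
        rw [← hq1P, ← map_mul, (φ₁ a).memr]⟩)
    (by
      show π' ((φ₁ 1).val) = i₁ ((1:CA₁), (0:ℂ))
      rw [map_one]
      show π' q₁.val = _
      exact hq1P)
    (fun a b => by
      show π' ((φ₁ (a + b)).val) = π' ((φ₁ a).val) + π' ((φ₁ b).val)
      rw [map_add, Corner.val_add, map_add])
    (fun a b => by
      show π' ((φ₁ (a * b)).val) = π' ((φ₁ a).val) * π' ((φ₁ b).val)
      rw [map_mul, Corner.val_mul, map_mul])
    (fun c a => by
      show π' ((φ₁ (c • a)).val) = c • π' ((φ₁ a).val)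
      rw [map_smul, Corner.val_smul, map_smul])
    (fun a => by
      show π' ((φ₁ (star a)).val) = star (π' ((φ₁ a).val))
      rw [map_star, Corner.val_star, map_star])
  obtain ⟨χ₁, -, hχ₁uniq⟩ := hF₁ (Corner qP₁) (CKFamily.map ψa₁ F₁)
  have ha1 : ψa₁ = χ₁ := hχ₁uniq ψa₁ ⟨fun v => rfl, fun e => rfl⟩
  have hb1 : ψb₁ = χ₁ := by
    apply hχ₁uniq
    constructor
    · intro v
      apply Corner.val_injective
      show π' ((φ₁ (F₁.p v)).val) = (ψa₁ (F₁.p v)).val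
      rw [hφ₁pv v]
      show π' (F.p ↑v) = i₁ (F₁.p v, 0)
      rw [hπ'p ↑v, hQpQ, hQp1' v]
    · intro e
      apply Corner.val_injective
      show π' ((φ₁ (F₁.se e)).val) = (ψa₁ (F₁.se e)).val
      rw [hφ₁sev e]
      show π' (F.se (Sum.inl e)) = i₁ (F₁.se e, 0)
      rw [hπ'se _]
      exact hQse1 e
  have hval1 : ∀ a : CA₁, π' ((φ₁ a).val) = i₁ (a, 0) := fun a => by
    have h := congrArg (fun ψ : CA₁ →⋆ₐ[ℂ] Corner qP₁ => (ψ a).val) (hb1.trans ha1.symm)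
    exact h
  -- mirror for the second leg
  let qP₂ : Proj P := ⟨i₂ (1, 0), by rw [← map_mul, hpm2, one_mul],
    by rw [← map_star, hps2, star_one]⟩
  let ψa₂ : CA₂ →⋆ₐ[ℂ] Corner qP₂ := Corner.lift qP₂ (fun a => i₂ (a, 0))
    (fun a => ⟨by rw [← map_mul, hpm2, one_mul], by rw [← map_mul, hpm2, mul_one]⟩)
    rfl
    (fun a b => by rw [← map_add]; congr 1; rw [Prod.mk_add_mk, add_zero])
    (fun a b => by rw [← map_mul, hpm2])
    (fun c a => by rw [← map_smul]; congr 1; rw [Prod.smul_mk, smul_zero])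
    (fun a => by rw [← map_star, hps2])
  let ψb₂ : CA₂ →⋆ₐ[ℂ] Corner qP₂ := Corner.lift qP₂ (fun a => π' ((φ₂ a).val))
    (fun a => ⟨by
        show i₂ ((1:CA₂), (0:ℂ)) * π' ((φ₂ a).val) = π' ((φ₂ a).val)
        rw [← hq2P, ← map_mul, (φ₂ a).meml], by
        show π' ((φ₂ a).val) * i₂ ((1:CA₂), (0:ℂ)) = π' ((φ₂ a).val)
        rw [← hq2P, ← map_mul, (φ₂ a).memr]⟩)
    (by
      show π' ((φ₂ 1).val) = i₂ ((1:CA₂), (0:ℂ))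
      rw [map_one]
      show π' q₂.val = _
      exact hq2P)
    (fun a b => by
      show π' ((φ₂ (a + b)).val) = π' ((φ₂ a).val) + π' ((φ₂ b).val)
      rw [map_add, Corner.val_add, map_add])
    (fun a b => by
      show π' ((φ₂ (a * b)).val) = π' ((φ₂ a).val) * π' ((φ₂ b).val)
      rw [map_mul, Corner.val_mul, map_mul])
    (fun c a => by
      show π' ((φ₂ (c • a)).val) = c • π' ((φ₂ a).val)
      rw [map_smul, Corner.val_smul, map_smul])
    (fun a => by
      show π' ((φ₂ (star a)).val) = star (π' ((φ₂ a).val))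
      rw [map_star, Corner.val_star, map_star])
  obtain ⟨χ₂, -, hχ₂uniq⟩ := hF₂ (Corner qP₂) (CKFamily.map ψa₂ F₂)
  have ha2 : ψa₂ = χ₂ := hχ₂uniq ψa₂ ⟨fun v => rfl, fun e => rfl⟩
  have hb2 : ψb₂ = χ₂ := by
    apply hχ₂uniq
    constructor
    · intro v
      apply Corner.val_injective
      show π' ((φ₂ (F₂.p v)).val) = (ψa₂ (F₂.p v)).val
      rw [hφ₂pv v]
      show π' (F.p ↑v) = i₂ (F₂.p v, 0)
      rw [hπ'p ↑v, hQpQ, hQpc' v]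
    · intro e
      apply Corner.val_injective
      show π' ((φ₂ (F₂.se e)).val) = (ψa₂ (F₂.se e)).val
      rw [hφ₂sev e]
      show π' (F.se (Sum.inr e)) = i₂ (F₂.se e, 0)
      rw [hπ'se _]
      exact hQse2 e
  have hval2 : ∀ a : CA₂, π' ((φ₂ a).val) = i₂ (a, 0) := fun a => by
    have h := congrArg (fun ψ : CA₂ →⋆ₐ[ℂ] Corner qP₂ => (ψ a).val) (hb2.trans ha2.symm)
    exact h
  -- the complements
  have h10 : (1 : P) - i₁ (1, 0) = i₁ (0, 1) := by
    have hz : ((1 : CA₁ × ℂ)) - (1, 0) = ((0 : CA₁), (1 : ℂ)) := by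
      rw [show (1 : CA₁ × ℂ) = ((1:CA₁), (1:ℂ)) from rfl, Prod.mk_sub_mk, sub_self, sub_zero]
    rw [← map_one i₁, ← map_sub, hz]
  have h20 : (1 : P) - i₂ (1, 0) = i₂ (0, 1) := by
    have hz : ((1 : CA₂ × ℂ)) - (1, 0) = ((0 : CA₂), (1 : ℂ)) := by
      rw [show (1 : CA₂ × ℂ) = ((1:CA₂), (1:ℂ)) from rfl, Prod.mk_sub_mk, sub_self, sub_zero]
    rw [← map_one i₂, ← map_sub, hz]
  have hππ₁ : ∀ x : CA₁ × ℂ, π' (π₁ x) = i₁ x := by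
    intro x
    show π' ((φ₁ x.1).val + x.2 • (1 - q₁.val)) = i₁ x
    rw [map_add, map_smul, map_sub, map_one, hval1, hq1P, h10, ← map_smul, ← map_add]
    congr 1
    rw [Prod.smul_mk, smul_zero, Prod.mk_add_mk, add_zero, zero_add, smul_eq_mul, mul_one]
  have hππ₂ : ∀ x : CA₂ × ℂ, π' (π₂ x) = i₂ x := by
    intro x
    show π' ((φ₂ x.1).val + x.2 • (1 - q₂.val)) = i₂ x
    rw [map_add, map_smul, map_sub, map_one, hval2, hq2P, h20, ← map_smul, ← map_add]
    congr 1
    rw [Prod.smul_mk, smul_zero, Prod.mk_add_mk, add_zero, zero_add, smul_eq_mul, mul_one]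
  -- π' ∘ π = id on P
  have hback : ∀ x : P, π' (π x) = x := by
    obtain ⟨ρ, -, hρuniq⟩ := hP.2 P i₁ i₂ hP.1
    have hA : (π'.comp π).comp i₁ = i₁ := StarAlgHom.ext fun x => by
      rw [StarAlgHom.comp_apply, StarAlgHom.comp_apply, hπ1', hππ₁]
    have hB : (π'.comp π).comp i₂ = i₂ := StarAlgHom.ext fun x => by
      rw [StarAlgHom.comp_apply, StarAlgHom.comp_apply, hπ2', hππ₂]
    have h1 := hρuniq (π'.comp π) ⟨hA, hB⟩
    have h2 := hρuniq (StarAlgHom.id ℂ P) ⟨StarAlgHom.id_comp i₁, StarAlgHom.id_comp i₂⟩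
    intro x
    have h := congrArg (fun f : P →⋆ₐ[ℂ] P => f x) (h1.trans h2.symm)
    simpa using h
  -- assemble the isomorphism
  refine ⟨StarAlgEquiv.mk (StarRingEquiv.mk (RingEquiv.mk (Equiv.mk π π' hback hforward)
    (map_mul π) (map_add π)) (map_star π)) (map_smul π), ?_, ?_, ?_, ?_, ?_, ?_⟩
  · intro v
    show π (i₁ (F₁.p v, 0)) = F.p ↑v
    rw [hπ1' _]
    show (φ₁ (F₁.p v)).val + (0:ℂ) • (1 - q₁.val) = F.p ↑v
    rw [hφ₁pv, zero_smul, add_zero]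
  · intro e
    show π (i₁ (F₁.se e, 0)) = F.se (Sum.inl e)
    rw [hπ1' _]
    show (φ₁ (F₁.se e)).val + (0:ℂ) • (1 - q₁.val) = F.se (Sum.inl e)
    rw [hφ₁sev, zero_smul, add_zero]
  · show π (i₁ (0, 1)) = _
    rw [hπ1' _]
    show (φ₁ 0).val + (1:ℂ) • (1 - q₁.val) = _
    rw [map_zero, Corner.val_zero, zero_add, one_smul, hq1c]
  · intro v
    show π (i₂ (F₂.p v, 0)) = F.p ↑v
    rw [hπ2' _]
    show (φ₂ (F₂.p v)).val + (0:ℂ) • (1 - q₂.val) = F.p ↑v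
    rw [hφ₂pv, zero_smul, add_zero]
  · intro e
    show π (i₂ (F₂.se e, 0)) = F.se (Sum.inr e)
    rw [hπ2' _]
    show (φ₂ (F₂.se e)).val + (0:ℂ) • (1 - q₂.val) = F.se (Sum.inr e)
    rw [hφ₂sev, zero_smul, add_zero]
  · show π (i₂ (0, 1)) = _
    rw [hπ2' _]
    show (φ₂ 0).val + (1:ℂ) • (1 - q₂.val) = _
    rw [map_zero, Corner.val_zero, zero_add, one_smul, hq2c]
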